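/- Let d ≥ 2, let Σ be a symmetric positive semidefinite real d×d matrix and r_1, …, r_d ∈ ℝ, and set r := Σ_{j=1}^d r_j, σ² := Σ_{j,k=1}^d Σ_{jk}, and s_i := Σ_{j=1}^d Σ_{ij} for a fixed i ∈ {1, …, d}. Assume r < 0, σ² > 0 and let α ∈ (0, 1). Define r(x) := r + (x−1)·r_i, v(x) := σ² + 2(x−1)·s_i + (x−1)²·Σ_{ii}, and q(x) := (v(x)/(2·r(x)))·ln α. Then q is differentiable at x = 1 with derivative q'(1) = ln α · (2r²·s_i − r_i·r·σ²)/(2r³). -/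

import Mathlib

open Real

/-- In the Brownian risk model with drift vector `rv` and covariance matrix
`C`, with `r = ∑ⱼ rvⱼ < 0`, `σ² = ∑_{j,k} C j k > 0`, `sᵢ = ∑ⱼ C i j` and `α ∈ (0,1)`,
the weighted dynamic value-at-risk `q(x) = v(x)/(2 r(x))·ln α`, where
`r(x) = r + (x−1) rvᵢ` and `v(x) = σ² + 2(x−1) sᵢ + (x−1)² Cᵢᵢ`, is differentiable at
`x = 1` with derivative `ln α·(2r² sᵢ − rᵢ r σ²)/(2r³)`. -/
theorem stmt_12 (d : ℕ) (hd : 2 ≤ d)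
    (C : Matrix (Fin d) (Fin d) ℝ) (hC : C.PosSemidef)
    (rv : Fin d → ℝ) (r : ℝ) (hr : r = ∑ j, rv j)
    (σ2 : ℝ) (hσ2 : σ2 = ∑ j, ∑ k, C j k)
    (i : Fin d) (si : ℝ) (hsi : si = ∑ j, C i j)
    (hrneg : r < 0) (hσ2pos : 0 < σ2) (α : ℝ) (hα : α ∈ Set.Ioo (0 : ℝ) 1)
    (rf vf q : ℝ → ℝ)
    (hrf : rf = fun x => r + (x - 1) * rv i)
    (hvf : vf = fun x => σ2 + 2 * (x - 1) * si + (x - 1) ^ 2 * C i i)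
    (hq : q = fun x => vf x / (2 * rf x) * Real.log α) :
    HasDerivAt q (Real.log α * (2 * r ^ 2 * si - rv i * r * σ2) / (2 * r ^ 3)) 1 := by
  have hrne : r ≠ 0 := ne_of_lt hrneg
  have hid : HasDerivAt (fun x : ℝ => x) 1 1 := hasDerivAt_id 1
  have hx1 : HasDerivAt (fun x : ℝ => x - 1) 1 1 := hid.sub_const 1
  have hv : HasDerivAt vf (2 * si) 1 := by
    subst hvf
    have h1 : HasDerivAt (fun x : ℝ => 2 * (x - 1) * si) (2 * si) 1 := by
      have := ((hx1.const_mul 2).mul_const si)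
      simpa using this
    have h2 : HasDerivAt (fun x : ℝ => (x - 1) ^ 2 * C i i) 0 1 := by
      have := ((hx1.pow 2).mul_const (C i i))
      simpa using this
    have := ((hasDerivAt_const (1:ℝ) σ2).add h1).add h2
    simpa [Pi.add_def] using this
  have hrd : HasDerivAt (fun x => 2 * rf x) (2 * rv i) 1 := by
    subst hrf
    have : HasDerivAt (fun x : ℝ => r + (x - 1) * rv i) (rv i) 1 := by
      have := (hasDerivAt_const (1:ℝ) r).add (hx1.mul_const (rv i))
      simpa [Pi.add_def] using this
    simpa using this.const_mul 2
  have hrf1 : rf 1 = r := by rw [hrf]; simp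
  have hvf1 : vf 1 = σ2 := by rw [hvf]; simp
  have hden : 2 * rf 1 ≠ 0 := by rw [hrf1]; simp [hrne]
  subst hq
  have hdiv := (hv.div hrd hden).mul_const (Real.log α)
  refine hdiv.congr_deriv ?_
  rw [hrf1, hvf1]
  field_simp
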